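/- One-step intertwining (Lemma: restriction is linear): for all probability measures ν on X and all m ∈ ℕ, (T_h^sel)^m(T̃_h(ν)) = (1 − h Σ_{i≠i•} ϱ_i)(T_h^sel)^{m+1}(ν) + h Σ_{i≠i•} ϱ_i · ((T_h^sel)^{m+1}(ν))_{C_i} ⊗ ν_{D_i}. -/

import Mathlib

open Finset Real Filter MeasureTheory

noncomputable section

abbrev X (n : ℕ) := Fin n → Bool

def isProb {n : ℕ} (ν : X n → ℝ) : Prop :=
  (∀ x, 0 ≤ ν x) ∧ ∑ x, ν x = 1

def Fsel {n : ℕ} (i0 : Fin n) (ν : X n → ℝ) : X n → ℝ :=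
  fun x => if x i0 = false then ν x else 0

def fsel {n : ℕ} (i0 : Fin n) (ν : X n → ℝ) : ℝ := ∑ x, Fsel i0 ν x

def phi {n : ℕ} (s : ℝ) (i0 : Fin n) (t : ℝ) (ν : X n → ℝ) : X n → ℝ :=
  fun x => (Real.exp (s * t) * Fsel i0 ν x + (ν x - Fsel i0 ν x)) /
    (Real.exp (s * t) * fsel i0 ν + 1 - fsel i0 ν)

/-- marginal of `ν` with respect to the coordinates in `A`, evaluated at (the
restriction to `A` of) `y`. -/
def marg {n : ℕ} (A : Finset (Fin n)) (ν : X n → ℝ) (y : X n) : ℝ :=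
  ∑ x, if ∀ i ∈ A, x i = y i then ν x else 0

/-- the `i`-tail `D_i = {j : i• ≤ i ≤ j or i• ≥ i ≥ j}`. -/
def Dtail {n : ℕ} (i0 i : Fin n) : Finset (Fin n) :=
  univ.filter (fun j => (i0 ≤ i ∧ i ≤ j) ∨ (i ≤ i0 ∧ j ≤ i))

/-- the `i`-head `C_i`, the complement of the tail. -/
def Chead {n : ℕ} (i0 i : Fin n) : Finset (Fin n) := univ \ Dtail i0 i

/-- Euler step of the pure selection equation. -/
def Tsel {n : ℕ} (s h : ℝ) (i0 : Fin n) (ν : X n → ℝ) : X n → ℝ :=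
  fun x => ν x + h * s * (Fsel i0 ν x - fsel i0 ν * ν x)

/-- the one-step approximate Euler operator T̃_h. -/
def Ttilde {n : ℕ} (s h : ℝ) (i0 : Fin n) (ρ : Fin n → ℝ) (ν : X n → ℝ) : X n → ℝ :=
  fun x => (1 - h * ∑ i ∈ univ.erase i0, ρ i) * Tsel s h i0 ν x
    + h * ∑ i ∈ univ.erase i0,
        ρ i * (marg (Chead i0 i) (Tsel s h i0 ν) x * marg (Dtail i0 i) ν x)


lemma prod_sum {n : ℕ} (C : Finset (Fin n)) (f g : X n → ℝ) :
    ∑ x : X n, marg C f x * marg (univ \ C) g x = (∑ x, f x) * (∑ x, g x) := by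
  calc ∑ x : X n, marg C f x * marg (univ \ C) g x
      = ∑ x : X n, ∑ y : X n, ∑ z : X n,
          (if ∀ i ∈ C, y i = x i then f y else 0) *
          (if ∀ i ∈ univ \ C, z i = x i then g z else 0) := by
        refine Finset.sum_congr rfl fun x _ => ?_
        rw [marg, marg, Finset.sum_mul_sum]
    _ = ∑ y : X n, ∑ z : X n, ∑ x : X n,
          (if ∀ i ∈ C, y i = x i then f y else 0) *
          (if ∀ i ∈ univ \ C, z i = x i then g z else 0) := by
        rw [Finset.sum_comm]
        exact Finset.sum_congr rfl fun y _ => Finset.sum_comm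
    _ = ∑ y : X n, ∑ z : X n, f y * g z := by
        refine Finset.sum_congr rfl fun y _ => Finset.sum_congr rfl fun z _ => ?_
        have hx : ∀ x : X n,
            ((∀ i ∈ C, y i = x i) ∧ (∀ i ∈ univ \ C, z i = x i)) ↔
              x = (fun j => if j ∈ C then y j else z j) := by
          intro x
          constructor
          · rintro ⟨h1, h2⟩
            funext j
            by_cases hj : j ∈ C
            · simp [hj, (h1 j hj).symm]
            · simp [hj, (h2 j (by simp [hj])).symm]
          · rintro rfl
            refine ⟨fun i hi => by simp [hi], fun i hi => ?_⟩
            simp only [Finset.mem_sdiff, Finset.mem_univ, true_and] at hi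
            simp [hi]
        calc ∑ x : X n,
              (if ∀ i ∈ C, y i = x i then f y else 0) *
              (if ∀ i ∈ univ \ C, z i = x i then g z else 0)
            = ∑ x : X n, if x = (fun j => if j ∈ C then y j else z j)
                then f y * g z else 0 := by
              refine Finset.sum_congr rfl fun x _ => ?_
              rw [ite_zero_mul_ite_zero, if_congr (hx x) rfl rfl]
          _ = f y * g z := by simp
    _ = (∑ x, f x) * (∑ x, g x) := by rw [Finset.sum_mul_sum]

lemma Dtail_eq {n : ℕ} (i0 i : Fin n) : Dtail i0 i = univ \ Chead i0 i := by
  simp [Chead]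

lemma i0_mem_Chead {n : ℕ} (i0 i : Fin n) (hi : i ≠ i0) : i0 ∈ Chead i0 i := by
  simp only [Chead, Finset.mem_sdiff, Finset.mem_univ, true_and, Dtail, Finset.mem_filter, not_or]
  constructor
  · rintro ⟨h1, h2⟩; exact hi (le_antisymm h2 h1)
  · rintro ⟨h1, h2⟩; exact hi (le_antisymm h1 h2)

lemma marg_comb {n : ℕ} (A : Finset (Fin n)) (a b : ℝ) (u v : X n → ℝ) (x : X n) :
    marg A (fun y => a * u y + b * v y) x = a * marg A u x + b * marg A v x := by
  unfold marg
  rw [Finset.mul_sum, Finset.mul_sum, ← Finset.sum_add_distrib]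
  refine Finset.sum_congr rfl fun y _ => ?_
  split <;> ring

lemma marg_Fsel {n : ℕ} (A : Finset (Fin n)) (i0 : Fin n) (hA : i0 ∈ A)
    (μ : X n → ℝ) (x : X n) :
    marg A (Fsel i0 μ) x = if x i0 = false then marg A μ x else 0 := by
  unfold marg Fsel
  by_cases hx : x i0 = false
  · simp only [hx, if_true]
    refine Finset.sum_congr rfl fun z _ => ?_
    by_cases hz : ∀ i ∈ A, z i = x i
    · have hzi := hz i0 hA
      simp [hz, hzi, hx]
    · simp [hz]
  · simp only [hx, if_false]
    refine Finset.sum_eq_zero fun z _ => ?_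
    by_cases hz : ∀ i ∈ A, z i = x i
    · have hzi := hz i0 hA
      simp [hz, hzi, hx]
    · simp [hz]

lemma Tsel_eq {n : ℕ} (s h : ℝ) (i0 : Fin n) (μ : X n → ℝ) :
    Tsel s h i0 μ = fun y => (1 - h * s * fsel i0 μ) * μ y + (h * s) * Fsel i0 μ y := by
  funext y; unfold Tsel; ring

lemma fsel_prod {n : ℕ} (i0 i : Fin n) (hi : i ≠ i0) (μ ν : X n → ℝ)
    (hν1 : ∑ x, ν x = 1) :
    fsel i0 (fun x => marg (Chead i0 i) μ x * marg (Dtail i0 i) ν x) = fsel i0 μ := by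
  have key : ∀ x : X n,
      Fsel i0 (fun y => marg (Chead i0 i) μ y * marg (Dtail i0 i) ν y) x
        = marg (Chead i0 i) (Fsel i0 μ) x * marg (Dtail i0 i) ν x := by
    intro x
    rw [marg_Fsel _ _ (i0_mem_Chead i0 i hi)]
    simp only [Fsel]
    split <;> simp
  calc fsel i0 (fun x => marg (Chead i0 i) μ x * marg (Dtail i0 i) ν x)
      = ∑ x, marg (Chead i0 i) (Fsel i0 μ) x * marg (Dtail i0 i) ν x :=
        Finset.sum_congr rfl fun x _ => key x
    _ = (∑ x, Fsel i0 μ x) * (∑ x, ν x) := by rw [Dtail_eq, prod_sum]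
    _ = fsel i0 μ := by rw [hν1, mul_one]; rfl

lemma key_step {n : ℕ} (i0 : Fin n) (s h : ℝ) (ρ : Fin n → ℝ) (μ ν : X n → ℝ)
    (hν1 : ∑ x, ν x = 1) :
    Tsel s h i0 (fun x => (1 - h * ∑ i ∈ univ.erase i0, ρ i) * μ x
      + h * ∑ i ∈ univ.erase i0,
          ρ i * (marg (Chead i0 i) μ x * marg (Dtail i0 i) ν x))
    = fun x => (1 - h * ∑ i ∈ univ.erase i0, ρ i) * Tsel s h i0 μ x
      + h * ∑ i ∈ univ.erase i0,
          ρ i * (marg (Chead i0 i) (Tsel s h i0 μ) x * marg (Dtail i0 i) ν x) := by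
  set c := h * ∑ i ∈ univ.erase i0, ρ i with hc
  set w : X n → ℝ := fun x => (1 - c) * μ x + h * ∑ i ∈ univ.erase i0,
      ρ i * (marg (Chead i0 i) μ x * marg (Dtail i0 i) ν x) with hw
  have hfw : fsel i0 w = fsel i0 μ := by
    have step1 : fsel i0 w = (1 - c) * fsel i0 μ
        + h * ∑ i ∈ univ.erase i0, ρ i *
            fsel i0 (fun y => marg (Chead i0 i) μ y * marg (Dtail i0 i) ν y) := by
      have hpt : ∀ x : X n, Fsel i0 w x = (1 - c) * Fsel i0 μ x
          + h * ∑ i ∈ univ.erase i0, ρ i *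
              Fsel i0 (fun y => marg (Chead i0 i) μ y * marg (Dtail i0 i) ν y) x := by
        intro x
        simp only [Fsel, hw]
        by_cases hx : x i0 = false
        · simp [hx]
        · simp [hx]
      calc fsel i0 w = ∑ x, ((1 - c) * Fsel i0 μ x
            + h * ∑ i ∈ univ.erase i0, ρ i *
                Fsel i0 (fun y => marg (Chead i0 i) μ y * marg (Dtail i0 i) ν y) x) :=
            Finset.sum_congr rfl fun x _ => hpt x
        _ = (1 - c) * ∑ x, Fsel i0 μ x
            + h * ∑ x, ∑ i ∈ univ.erase i0, ρ i *
                Fsel i0 (fun y => marg (Chead i0 i) μ y * marg (Dtail i0 i) ν y) x := by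
            rw [Finset.sum_add_distrib, ← Finset.mul_sum, ← Finset.mul_sum]
        _ = (1 - c) * fsel i0 μ
            + h * ∑ i ∈ univ.erase i0, ρ i *
                fsel i0 (fun y => marg (Chead i0 i) μ y * marg (Dtail i0 i) ν y) := by
            rw [Finset.sum_comm]
            refine congrArg _ (congrArg _ (Finset.sum_congr rfl fun i _ => ?_))
            rw [← Finset.mul_sum]
            rfl
    rw [step1]
    have : ∀ i ∈ univ.erase i0, ρ i *
        fsel i0 (fun y => marg (Chead i0 i) μ y * marg (Dtail i0 i) ν y)
          = ρ i * fsel i0 μ := fun i hi => by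
      rw [fsel_prod i0 i (Finset.ne_of_mem_erase hi) μ ν hν1]
    rw [Finset.sum_congr rfl this, ← Finset.sum_mul]
    rw [hc]; ring
  funext x
  have hK : ∀ K : ℝ, K = 1 + h * s * ((if x i0 = false then (1:ℝ) else 0) - fsel i0 μ) →
      True := fun _ _ => trivial
  set K : ℝ := 1 + h * s * ((if x i0 = false then (1:ℝ) else 0) - fsel i0 μ) with hKdef
  have hTμ : Tsel s h i0 μ x = K * μ x := by
    simp only [Tsel, Fsel, hKdef]
    split <;> ring
  have hTw : Tsel s h i0 w x = K * w x := by
    simp only [Tsel, Fsel, hfw, hKdef]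
    split <;> ring
  have hmarg : ∀ i ∈ univ.erase i0,
      ρ i * (marg (Chead i0 i) (Tsel s h i0 μ) x * marg (Dtail i0 i) ν x)
        = ρ i * (K * (marg (Chead i0 i) μ x * marg (Dtail i0 i) ν x)) := by
    intro i hi
    have hi' : i ≠ i0 := Finset.ne_of_mem_erase hi
    rw [Tsel_eq, marg_comb, marg_Fsel _ _ (i0_mem_Chead i0 i hi')]
    simp only [hKdef]
    split <;> ring
  show Tsel s h i0 w x = (1 - c) * Tsel s h i0 μ x + h * ∑ i ∈ univ.erase i0,
      ρ i * (marg (Chead i0 i) (Tsel s h i0 μ) x * marg (Dtail i0 i) ν x)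
  rw [hTw, hTμ, Finset.sum_congr rfl hmarg]
  have hsum : ∑ i ∈ univ.erase i0,
      ρ i * (K * (marg (Chead i0 i) μ x * marg (Dtail i0 i) ν x))
        = K * ∑ i ∈ univ.erase i0,
            ρ i * (marg (Chead i0 i) μ x * marg (Dtail i0 i) ν x) := by
    rw [Finset.mul_sum]
    exact Finset.sum_congr rfl fun i _ => by ring
  rw [hsum, hw]
  ring

/-- One-step intertwining (restriction is linear). -/
theorem stmt_7 {n : ℕ} (i0 : Fin n) (s h : ℝ) (hs : 0 < s) (hh : 0 < h)
    (ρ : Fin n → ℝ) (hρ : ∀ i, i ≠ i0 → 0 ≤ ρ i)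
    (hsmall : 0 ≤ 1 - h * ∑ i ∈ univ.erase i0, ρ i)
    (hTselP : ∀ ν : X n → ℝ, isProb ν → isProb (Tsel s h i0 ν))
    (ν : X n → ℝ) (hν : isProb ν) (m : ℕ) :
    (Tsel s h i0)^[m] (Ttilde s h i0 ρ ν)
      = fun x => (1 - h * ∑ i ∈ univ.erase i0, ρ i) * (Tsel s h i0)^[m + 1] ν x
          + h * ∑ i ∈ univ.erase i0,
              ρ i * (marg (Chead i0 i) ((Tsel s h i0)^[m + 1] ν) x
                      * marg (Dtail i0 i) ν x) := by
  induction m with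
  | zero =>
      simp only [Function.iterate_zero, id_eq, Function.iterate_one]
      rfl
  | succ m ih =>
      rw [Function.iterate_succ_apply', ih,
        key_step i0 s h ρ ((Tsel s h i0)^[m + 1] ν) ν hν.2]
      have he : (Tsel s h i0)^[m + 1 + 1] ν
          = Tsel s h i0 ((Tsel s h i0)^[m + 1] ν) :=
        Function.iterate_succ_apply' _ _ _
      rw [he]
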